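/- Fix integers 0 ≤ k ≤ s and polynomials g₁,…,g_{s+1} ∈ ℂ[x]. For i = s−k+1,…,s+1 set V(i) = Wr(g₁,…,g_{s−k}, g_i). Then Wr(V(s−k+1), V(s−k+2), …, V(s+1)) = (Wr(g₁,…,g_{s−k}))^k · Wr(g₁,…,g_{s+1}). -/

import Mathlib

open Polynomial

/-- The Wronskian determinant of an `m`-tuple of complex polynomials:
the determinant of the `m × m` matrix whose `(i,j)` entry is the `j`-th
derivative of the `i`-th polynomial. -/
noncomputable def Wr {m : ℕ} (f : Fin m → Polynomial ℂ) : Polynomial ℂ :=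
  Matrix.det (Matrix.of fun i j : Fin m =>
    (fun p : Polynomial ℂ => Polynomial.derivative p)^[j.val] (f i))


open Finset

namespace WrAux

variable {K : Type*} [CommRing K]

/-- Unbundled derivation. -/
structure IsDeriv (d : K → K) : Prop where
  map_add : ∀ a b : K, d (a + b) = d a + d b
  leibniz : ∀ a b : K, d (a * b) = a * d b + d a * b

namespace IsDeriv

variable {d : K → K} (hd : IsDeriv d)
include hd

lemma map_zero' : d 0 = 0 := (AddMonoidHom.mk' d hd.map_add).map_zero

lemma map_one' : d 1 = 0 := by
  have h := hd.leibniz 1 1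
  simp only [mul_one, one_mul] at h
  exact (right_eq_add.mp h)

lemma map_sum' {ι : Type*} (s : Finset ι) (f : ι → K) :
    d (∑ i ∈ s, f i) = ∑ i ∈ s, d (f i) :=
  map_sum (AddMonoidHom.mk' d hd.map_add) f s

lemma map_nsmul' (n : ℕ) (a : K) : d (n • a) = n • d a :=
  (AddMonoidHom.mk' d hd.map_add).map_nsmul n a

lemma iterate_map_zero' (n : ℕ) : d^[n] 0 = 0 := by
  induction n with
  | zero => rfl
  | succ n ih => rw [Function.iterate_succ_apply, hd.map_zero', ih]

lemma iterate_map_one_succ (n : ℕ) : d^[n + 1] (1 : K) = 0 := by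
  rw [Function.iterate_succ_apply, hd.map_one', hd.iterate_map_zero']

theorem iterate_leibniz (a b : K) (n : ℕ) :
    d^[n] (a * b) = ∑ k ∈ range (n + 1), n.choose k • (d^[n - k] a * d^[k] b) := by
  induction n with
  | zero => simp [Finset.range]
  | succ n IH =>
    calc
      d^[n + 1] (a * b) =
          d (∑ k ∈ range n.succ, n.choose k • (d^[n - k] a * d^[k] b)) := by
        rw [Function.iterate_succ_apply', IH]
      _ = (∑ k ∈ range n.succ,
            n.choose k • (d^[n - k + 1] a * d^[k] b)) +
          ∑ k ∈ range n.succ,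
            n.choose k • (d^[n - k] a * d^[k + 1] b) := by
        rw [hd.map_sum']
        rw [← sum_add_distrib]
        refine Finset.sum_congr rfl fun k _ => ?_
        rw [hd.map_nsmul', hd.leibniz, ← smul_add]
        congr 1
        rw [Function.iterate_succ_apply', Function.iterate_succ_apply']
        ring
      _ = (∑ k ∈ range n.succ,
                n.choose k.succ • (d^[n - k] a * d^[k + 1] b)) +
              1 • (d^[n + 1] a * d^[0] b) +
            ∑ k ∈ range n.succ, n.choose k • (d^[n - k] a * d^[k + 1] b) := ?_
      _ = ((∑ k ∈ range n.succ, n.choose k • (d^[n - k] a * d^[k + 1] b)) +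
              ∑ k ∈ range n.succ,
                n.choose k.succ • (d^[n - k] a * d^[k + 1] b)) +
            1 • (d^[n + 1] a * d^[0] b) := by
        rw [add_comm, add_assoc]
      _ = (∑ i ∈ range n.succ,
              (n + 1).choose (i + 1) • (d^[n + 1 - (i + 1)] a * d^[i + 1] b)) +
            1 • (d^[n + 1] a * d^[0] b) := by
        simp_rw [Nat.choose_succ_succ, Nat.succ_sub_succ, add_smul, sum_add_distrib]
      _ = ∑ k ∈ range n.succ.succ,
            n.succ.choose k • (d^[n.succ - k] a * d^[k] b) := by
        rw [sum_range_succ' _ n.succ, Nat.choose_zero_right, tsub_zero]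
    congr
    refine (sum_range_succ' _ _).trans (congr_arg₂ (· + ·) ?_ ?_)
    · rw [sum_range_succ, Nat.choose_succ_self, zero_smul, add_zero]
      refine sum_congr rfl fun k hk => ?_
      rw [mem_range] at hk
      congr
      omega
    · rw [Nat.choose_zero_right, tsub_zero]

end IsDeriv

end WrAux

namespace WrAux

open WrAux.IsDeriv

variable {K : Type*} [CommRing K]

/-- Abstract Wronskian. -/
noncomputable def wr (d : K → K) {m : ℕ} (f : Fin m → K) : K :=
  Matrix.det (Matrix.of fun i j : Fin m => d^[j.1] (f i))

lemma wr_fin_zero (d : K → K) (f : Fin 0 → K) : wr d f = 1 :=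
  Matrix.det_fin_zero

lemma wr_fin_one (d : K → K) (f : Fin 1 → K) : wr d f = f 0 := by
  rw [wr, Matrix.det_fin_one]; rfl

lemma wr_cast (d : K → K) {a b : ℕ} (e : b = a) (f : Fin a → K) :
    wr d (f ∘ Fin.cast e) = wr d f := by
  subst e
  simp only [Fin.cast_refl, Function.comp_id]

lemma comp_append {α β : Type*} (F : α → β) {n m : ℕ} (u : Fin n → α) (v : Fin m → α) :
    F ∘ Fin.append u v = Fin.append (F ∘ u) (F ∘ v) := by
  funext i
  refine Fin.addCases (fun i => ?_) (fun i => ?_) i <;>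
    simp [Fin.append_left, Fin.append_right]

lemma iterate_comm {L : Type*} [CommRing L] (φ : K →+* L) (dK : K → K) (dL : L → L)
    (hcomm : ∀ x, φ (dK x) = dL (φ x)) (j : ℕ) (x : K) :
    φ (dK^[j] x) = dL^[j] (φ x) := by
  induction j generalizing x with
  | zero => rfl
  | succ j ih =>
    rw [Function.iterate_succ_apply, Function.iterate_succ_apply, ih, hcomm]

lemma wr_map {L : Type*} [CommRing L] (φ : K →+* L) (dK : K → K) (dL : L → L)
    (hcomm : ∀ x, φ (dK x) = dL (φ x)) {m : ℕ} (f : Fin m → K) :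
    φ (wr dK f) = wr dL (fun i => φ (f i)) := by
  rw [wr, wr, RingHom.map_det]
  congr 1
  ext i j
  simp only [Matrix.map_apply, Matrix.of_apply, RingHom.mapMatrix_apply]
  exact iterate_comm φ dK dL hcomm j.1 (f i)

lemma wr_const_mul {d : K → K} (hd : IsDeriv d) (c : K) {m : ℕ} (u : Fin m → K) :
    wr d (fun i => c * u i) = c ^ m * wr d u := by
  classical
  have hM : (Matrix.of fun i j : Fin m => d^[j.1] (c * u i))
      = (Matrix.of fun i r : Fin m => d^[r.1] (u i)) *
        (Matrix.of fun r j : Fin m =>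
          if r.1 ≤ j.1 then (j.1.choose r.1) • d^[j.1 - r.1] c else 0) := by
    ext i j
    simp only [Matrix.mul_apply, Matrix.of_apply, mul_ite, mul_zero]
    rw [hd.iterate_leibniz]
    rw [Fin.sum_univ_eq_sum_range
      (fun r => if r ≤ j.1 then d^[r] (u i) * ((j.1.choose r) • d^[j.1 - r] c) else 0) m]
    rw [← Finset.sum_subset (Finset.range_subset_range.mpr j.isLt)
      (fun r _ hr => by
        rw [Finset.mem_range, Nat.lt_succ_iff, not_le] at hr
        simp [Nat.not_le.mpr hr])]
    refine Finset.sum_congr rfl fun r hr => ?_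
    rw [Finset.mem_range, Nat.lt_succ_iff] at hr
    rw [if_pos hr, mul_smul_comm, mul_comm (d^[j.1 - r] c)]
  rw [wr, hM, Matrix.det_mul, wr, mul_comm]
  congr 1
  rw [Matrix.det_of_upperTriangular]
  · rw [Finset.prod_congr rfl (fun i _ => ?_), Finset.prod_const, Finset.card_univ,
      Fintype.card_fin]
    simp
  · intro i j hij
    simp only [Matrix.of_apply]
    rw [if_neg (by exact Nat.not_le.mpr hij)]

lemma wr_cons_one {d : K → K} (hd : IsDeriv d) {m : ℕ} (u : Fin m → K) :
    wr d (Fin.cons (1 : K) u) = wr d (fun i => d (u i)) := by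
  classical
  rw [wr, Matrix.det_succ_row_zero]
  rw [Finset.sum_eq_single 0]
  · simp only [Fin.val_zero, pow_zero, one_mul, Matrix.of_apply, Fin.cons_zero,
      Function.iterate_zero, id_eq]
    rw [wr]
    congr 1
  · intro j _ hj
    have : ∃ p : ℕ, (j : ℕ) = p + 1 := by
      refine Nat.exists_eq_succ_of_ne_zero ?_
      exact fun h => hj (Fin.ext (h.trans (Fin.val_zero _).symm))
    obtain ⟨p, hp⟩ := this
    simp only [Matrix.of_apply, Fin.cons_zero, hp, hd.iterate_map_one_succ, mul_zero, zero_mul]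
  · intro h
    exact absurd (Finset.mem_univ 0) h

end WrAux

namespace WrAux

section FieldPart

variable {K : Type*} [Field K] {d : K → K}

lemma wr_cons (hd : IsDeriv d) {m : ℕ} {f : K} (hf : f ≠ 0) (u : Fin m → K) :
    wr d (Fin.cons f u) = f ^ (m + 1) * wr d (fun i => d (u i / f)) := by
  have h1 : Fin.cons f u = fun i => f * ((Fin.cons (1 : K) (fun i => u i / f) : Fin (m + 1) → K)) i := by
    funext i
    refine Fin.cases ?_ (fun i => ?_) i
    · simp
    · simp only [Fin.cons_succ]
      rw [mul_div_cancel₀ _ hf]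
  rw [h1, wr_const_mul hd, wr_cons_one hd]

lemma seg_cons {n : ℕ} (g : Fin (n + 1) → K) (j : ℕ) (hj : j + 1 ≤ n + 1) :
    (fun i : Fin (j + 1) => g (Fin.castLE hj i))
      = Fin.cons (g 0) (fun i : Fin j =>
          Fin.tail g (Fin.castLE (Nat.succ_le_succ_iff.mp hj) i)) := by
  funext i
  refine Fin.cases ?_ (fun i => ?_) i
  · simp
  · simp only [Fin.cons_succ, Fin.tail]
    congr 1

theorem key (hd : IsDeriv d) :
    ∀ (n : ℕ) (g : Fin n → K),
      (∀ (j : ℕ) (hj : j ≤ n), wr d (fun i : Fin j => g (Fin.castLE hj i)) ≠ 0) →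
      ∀ (m : ℕ) (h : Fin m → K),
        wr d (fun i : Fin m => wr d (Fin.append g ![h i])) * wr d g
          = wr d g ^ m * wr d (Fin.append g h) := by
  intro n
  induction n with
  | zero =>
    intro g _ m h
    have e1 : ∀ x : K, wr d (Fin.append g ![x]) = x := by
      intro x
      rw [Fin.append_left_nil g ![x] rfl, wr_cast, wr_fin_one]
      rfl
    have e2 : wr d (Fin.append g h) = wr d h := by
      rw [Fin.append_left_nil g h rfl, wr_cast]
    rw [wr_fin_zero, e2]
    simp only [e1]
    simp
  | succ n IH =>
    intro g hseg m h
    set f := g 0 with hf0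
    have hf : f ≠ 0 := by
      have h1 := hseg 1 (by omega)
      rw [wr_fin_one] at h1
      exact h1
    set v := Fin.tail g with hv
    set gh : Fin n → K := fun i => d (v i / f) with hgh
    have hred : ∀ (p : ℕ) (hp : p ≤ n),
        wr d (fun i : Fin (p + 1) => g (Fin.castLE (Nat.succ_le_succ hp) i))
          = f ^ (p + 1) * wr d (fun i : Fin p => gh (Fin.castLE hp i)) := by
      intro p hp
      rw [seg_cons g p (Nat.succ_le_succ hp), wr_cons hd hf]
    have hseg' : ∀ (j : ℕ) (hj : j ≤ n),
        wr d (fun i : Fin j => gh (Fin.castLE hj i)) ≠ 0 := by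
      intro j hj
      have h2 := hseg (j + 1) (Nat.succ_le_succ hj)
      rw [hred j hj] at h2
      exact fun hzero => h2 (by rw [hzero, mul_zero])
    have hwrg : wr d g = f ^ (n + 1) * wr d gh := by
      have h3 := hred n le_rfl
      have e4 : (fun i : Fin (n + 1) => g (Fin.castLE (Nat.succ_le_succ le_rfl) i)) = g := by
        funext i; congr 1
      have e5 : (fun i : Fin n => gh (Fin.castLE le_rfl i)) = gh := by
        funext i; congr 1
      rw [e4, e5] at h3
      exact h3
    have happ : ∀ (m' : ℕ) (h' : Fin m' → K),
        wr d (Fin.append g h')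
          = f ^ (n + m' + 1) * wr d (Fin.append gh (fun i => d (h' i / f))) := by
      intro m' h'
      have h2 : Fin.append g h'
          = (Fin.cons f (Fin.append v h')) ∘ Fin.cast (Nat.add_right_comm n 1 m') := by
        conv_lhs => rw [← Fin.cons_self_tail g]
        rw [Fin.append_cons]
      have h3 : (fun i => d (Fin.append v h' i / f))
          = Fin.append gh (fun i => d (h' i / f)) := by
        funext i
        have h4 := congrFun (comp_append (fun x => d (x / f)) v h') i
        exact h4
      rw [h2, wr_cast, wr_cons hd hf, h3]
    set hh : Fin m → K := fun i => d (h i / f) with hhh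
    have hV : (fun i : Fin m => wr d (Fin.append g ![h i]))
        = fun i : Fin m => f ^ (n + 1 + 1) * wr d (Fin.append gh ![hh i]) := by
      funext i
      rw [happ 1 ![h i]]
      have h5 : (fun j : Fin 1 => d ((![h i] : Fin 1 → K) j / f)) = ![hh i] := by
        funext j
        obtain rfl : j = 0 := Subsingleton.elim j 0
        rfl
      rw [h5]
    have hIH := IH gh hseg' m hh
    rw [hV, wr_const_mul hd, hwrg, happ m h]
    have h6 : (fun i : Fin m => d (h i / f)) = hh := rfl
    rw [h6]
    calc (f ^ (n + 1 + 1)) ^ m *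
          (wr d fun i : Fin m => wr d (Fin.append gh ![hh i])) * (f ^ (n + 1) * wr d gh)
        = (f ^ (n + 1 + 1)) ^ m * f ^ (n + 1) *
          ((wr d fun i : Fin m => wr d (Fin.append gh ![hh i])) * wr d gh) := by ring
      _ = (f ^ (n + 1 + 1)) ^ m * f ^ (n + 1) * (wr d gh ^ m * wr d (Fin.append gh hh)) := by
          rw [hIH]
      _ = (f ^ (n + 1) * wr d gh) ^ m * (f ^ (n + m + 1) * wr d (Fin.append gh hh)) := by
          rw [mul_pow, ← pow_mul, ← pow_mul, ← pow_add,
            show (n + 1 + 1) * m + (n + 1) = (n + 1) * m + (n + m + 1) by ring, pow_add]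
          ring

end FieldPart

end WrAux


namespace WrAux

open Polynomial

lemma isDeriv_polyDeriv {S : Type*} [CommRing S] :
    IsDeriv (fun p : Polynomial S => derivative p) :=
  ⟨fun a b => derivative_add, fun a b => by
    show derivative (a * b) = a * derivative b + derivative a * b
    rw [derivative_mul]; ring⟩




section Frac

variable {B : Type*} [CommRing B] [IsDomain B] [UniqueFactorizationMonoid B]

local notation "R" => Polynomial B
local notation "K" => FractionRing (Polynomial B)
local notation "ι" => algebraMap (Polynomial B) (FractionRing (Polynomial B))

/-- Extension of the polynomial derivative to the fraction field. -/
noncomputable def fderiv (x : K) : K :=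
  ι (derivative (IsFractionRing.num R x) * (IsFractionRing.den R x : R)
      - IsFractionRing.num R x * derivative (IsFractionRing.den R x : R))
    / ι ((IsFractionRing.den R x : R) ^ 2)

lemma to_map_ne_zero {p : R} (hp : p ≠ 0) : ι p ≠ 0 := fun h =>
  hp ((map_eq_zero_iff _ (IsFractionRing.injective R K)).mp h)

lemma fderiv_spec (a b : R) (hb : b ≠ 0) (x : K) (hx : x = ι a / ι b) :
    fderiv x = ι (derivative a * b - a * derivative b) / ι (b ^ 2) := by
  set N := IsFractionRing.num R x with hN
  set E := (IsFractionRing.den R x : R) with hE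
  have hEne : E ≠ 0 := nonZeroDivisors.coe_ne_zero _
  have hιE : ι E ≠ 0 := to_map_ne_zero hEne
  have hιb : ι b ≠ 0 := to_map_ne_zero hb
  have hrel0 : ι N / ι E = ι a / ι b := by
    rw [← hx]
    rw [IsFractionRing.mk'_num_den' R x]
  have hrel : N * b = a * E := by
    apply IsFractionRing.injective R K
    rw [map_mul, map_mul]
    rw [div_eq_div_iff hιE hιb] at hrel0
    exact hrel0
  have hder : derivative N * b + N * derivative b
      = derivative a * E + a * derivative E := by
    have h := congrArg (fun p : R => derivative p) hrel
    simp only [derivative_mul] at h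
    linear_combination h
  rw [fderiv, ← hN, ← hE]
  rw [div_eq_div_iff (to_map_ne_zero (pow_ne_zero 2 hEne)) (to_map_ne_zero (pow_ne_zero 2 hb))]
  rw [← map_mul, ← map_mul]
  congr 1
  linear_combination (E * b) * hder - (derivative E * b + derivative b * E) * hrel

lemma fderiv_algebraMap (p : R) : fderiv (ι p) = ι (derivative p) := by
  rw [fderiv_spec p 1 one_ne_zero (ι p) (by simp)]
  simp

lemma fderiv_add (x y : K) : fderiv (x + y) = fderiv x + fderiv y := by
  obtain ⟨a, b, hb, hx⟩ : ∃ a b : R, b ≠ 0 ∧ x = ι a / ι b :=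
    ⟨IsFractionRing.num R x, (IsFractionRing.den R x : R), nonZeroDivisors.coe_ne_zero _,
      (IsFractionRing.mk'_num_den' R x).symm⟩
  obtain ⟨c, e, he, hy⟩ : ∃ c e : R, e ≠ 0 ∧ y = ι c / ι e :=
    ⟨IsFractionRing.num R y, (IsFractionRing.den R y : R), nonZeroDivisors.coe_ne_zero _,
      (IsFractionRing.mk'_num_den' R y).symm⟩
  have hιb : ι b ≠ 0 := to_map_ne_zero hb
  have hιe : ι e ≠ 0 := to_map_ne_zero he
  have hxy : x + y = ι (a * e + c * b) / ι (b * e) := by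
    rw [hx, hy, div_add_div _ _ hιb hιe, map_add, map_mul, map_mul, map_mul]
    ring
  rw [fderiv_spec _ _ (mul_ne_zero hb he) _ hxy, fderiv_spec a b hb x hx,
    fderiv_spec c e he y hy]
  rw [div_add_div _ _ (to_map_ne_zero (pow_ne_zero 2 hb)) (to_map_ne_zero (pow_ne_zero 2 he)),
    div_eq_div_iff (to_map_ne_zero (pow_ne_zero 2 (mul_ne_zero hb he)))
      (mul_ne_zero (to_map_ne_zero (pow_ne_zero 2 hb)) (to_map_ne_zero (pow_ne_zero 2 he)))]
  simp only [← map_mul, ← map_add]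
  congr 1
  simp only [derivative_add, derivative_mul]
  ring

lemma fderiv_mul (x y : K) : fderiv (x * y) = x * fderiv y + fderiv x * y := by
  obtain ⟨a, b, hb, hx⟩ : ∃ a b : R, b ≠ 0 ∧ x = ι a / ι b :=
    ⟨IsFractionRing.num R x, (IsFractionRing.den R x : R), nonZeroDivisors.coe_ne_zero _,
      (IsFractionRing.mk'_num_den' R x).symm⟩
  obtain ⟨c, e, he, hy⟩ : ∃ c e : R, e ≠ 0 ∧ y = ι c / ι e :=
    ⟨IsFractionRing.num R y, (IsFractionRing.den R y : R), nonZeroDivisors.coe_ne_zero _,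
      (IsFractionRing.mk'_num_den' R y).symm⟩
  have hιb : ι b ≠ 0 := to_map_ne_zero hb
  have hιe : ι e ≠ 0 := to_map_ne_zero he
  have hxy : x * y = ι (a * c) / ι (b * e) := by
    rw [hx, hy, map_mul, map_mul, div_mul_div_comm]
  rw [fderiv_spec _ _ (mul_ne_zero hb he) _ hxy, fderiv_spec a b hb x hx,
    fderiv_spec c e he y hy, hx, hy]
  rw [div_mul_div_comm, div_mul_div_comm,
    div_add_div _ _ (mul_ne_zero hιb (to_map_ne_zero (pow_ne_zero 2 he)))
      (mul_ne_zero (to_map_ne_zero (pow_ne_zero 2 hb)) hιe),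
    div_eq_div_iff (to_map_ne_zero (pow_ne_zero 2 (mul_ne_zero hb he)))
      (mul_ne_zero (mul_ne_zero hιb (to_map_ne_zero (pow_ne_zero 2 he)))
        (mul_ne_zero (to_map_ne_zero (pow_ne_zero 2 hb)) hιe))]
  simp only [← map_mul, ← map_add]
  congr 1
  simp only [derivative_mul]
  ring

end Frac



section Pert

/-- coefficient embedding `ℂ[x] → (ℂ[t])[x]`. -/
noncomputable def ιR : Polynomial ℂ →+* Polynomial (Polynomial ℂ) :=
  Polynomial.mapRingHom (Polynomial.C : ℂ →+* Polynomial ℂ)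

lemma ιR_comm (p : Polynomial ℂ) : ιR (derivative p) = derivative (ιR p) := by
  simp [ιR, derivative_map]

lemma monomial_wr_ne_zero (n : ℕ) :
    wr (fun p : Polynomial ℂ => derivative p) (fun i : Fin n => (X : Polynomial ℂ) ^ (i : ℕ))
      ≠ 0 := by
  rw [wr]
  rw [Matrix.det_of_lowerTriangular _ ?tri]
  case tri =>
    intro i j hij
    have hlt : (i : ℕ) < (j : ℕ) := hij
    simp only [Matrix.of_apply]
    rw [Polynomial.iterate_derivative_X_pow_eq_smul]
    rw [Nat.descFactorial_eq_zero_iff_lt.mpr hlt]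
    simp
  · apply Finset.prod_ne_zero_iff.mpr
    intro i _
    simp only [Matrix.of_apply]
    rw [Polynomial.iterate_derivative_X_pow_eq_smul, Nat.descFactorial_self, Nat.sub_self,
      pow_zero]
    exact smul_ne_zero
      (Nat.cast_ne_zero (R := ℂ).mpr (Nat.factorial_ne_zero (i : ℕ))) one_ne_zero

lemma iter_der_add {S : Type*} [CommSemiring S] (j : ℕ) (p q : Polynomial S) :
    derivative^[j] (p + q) = derivative^[j] p + derivative^[j] q := by
  induction j generalizing p q with
  | zero => rfl
  | succ j ih => rw [Function.iterate_succ_apply, Function.iterate_succ_apply,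
      Function.iterate_succ_apply, derivative_add, ih]

lemma pert_wr_ne_zero (n : ℕ) (u : Fin n → Polynomial ℂ) :
    wr (fun p : Polynomial (Polynomial ℂ) => derivative p)
      (fun i : Fin n => ιR (u i) + Polynomial.C Polynomial.X * X ^ (i : ℕ)) ≠ 0 := by
  classical
  set t : Polynomial ℂ := Polynomial.X with ht
  set q : Finset (Fin n) → Fin n → Polynomial ℂ :=
    fun s => s.piecewise (fun i => (X : Polynomial ℂ) ^ (i : ℕ)) u with hq
  set xrow : Fin n → Fin n → Polynomial (Polynomial ℂ) :=
    fun i j => derivative^[j.1] ((X : Polynomial (Polynomial ℂ)) ^ (i : ℕ)) with hxrow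
  set urow : Fin n → Fin n → Polynomial (Polynomial ℂ) :=
    fun i j => derivative^[j.1] (ιR (u i)) with hurow
  have hsum : wr (fun p : Polynomial (Polynomial ℂ) => derivative p)
      (fun i : Fin n => ιR (u i) + Polynomial.C t * X ^ (i : ℕ))
      = ∑ s : Finset (Fin n),
          (Polynomial.C t) ^ s.card • ιR (wr (fun p : Polynomial ℂ => derivative p) (q s)) := by
    have hrows : (Matrix.of fun i j : Fin n =>
        (fun p : Polynomial (Polynomial ℂ) => derivative p)^[j.1]
          (ιR (u i) + Polynomial.C t * X ^ (i : ℕ)))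
        = ((fun i => Polynomial.C t • xrow i) + urow : Fin n → Fin n → Polynomial (Polynomial ℂ)) := by
      funext i j
      show derivative^[j.1] (ιR (u i) + Polynomial.C t * X ^ (i : ℕ)) = _
      rw [iter_der_add, Polynomial.iterate_derivative_C_mul]
      simp only [Pi.add_apply, Pi.smul_apply, smul_eq_mul, hxrow, hurow]
      ring
    rw [wr, hrows]
    show (Matrix.detRowAlternating : (Fin n → Polynomial (Polynomial ℂ))
        [⋀^Fin n]→ₗ[Polynomial (Polynomial ℂ)] Polynomial (Polynomial ℂ))
      ((fun i => Polynomial.C t • xrow i) + urow) = _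
    have hAdd := (Matrix.detRowAlternating (R := Polynomial (Polynomial ℂ))
      (n := Fin n)).toMultilinearMap.map_add_univ (fun i => Polynomial.C t • xrow i) urow
    simp only [AlternatingMap.coe_multilinearMap] at hAdd
    rw [hAdd]
    refine Finset.sum_congr rfl fun s _ => ?_
    have hpiece : s.piecewise (fun i => Polynomial.C t • xrow i) urow
        = fun i => (if i ∈ s then Polynomial.C t else 1) • (s.piecewise xrow urow) i := by
      funext i
      by_cases hi : i ∈ s <;> simp [Finset.piecewise, hi]
    have hSmul := (Matrix.detRowAlternating (R := Polynomial (Polynomial ℂ))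
      (n := Fin n)).toMultilinearMap.map_smul_univ
      (fun i => if i ∈ s then Polynomial.C t else (1 : Polynomial (Polynomial ℂ)))
      (s.piecewise xrow urow)
    simp only [AlternatingMap.coe_multilinearMap] at hSmul
    rw [hpiece, hSmul]
    congr 1
    · rw [Finset.prod_ite_mem Finset.univ s (fun _ => Polynomial.C t), Finset.univ_inter,
        Finset.prod_const]
    · have hq2 : s.piecewise xrow urow = fun i j => derivative^[j.1] (ιR (q s i)) := by
        funext i j
        by_cases hi : i ∈ s <;>
          simp [Finset.piecewise, hi, hq, hxrow, hurow, ιR, Polynomial.map_pow]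
      rw [hq2]
      rw [wr_map ιR _ _ (fun x => ιR_comm x)]
      rfl
  intro h0
  set W := wr (fun p : Polynomial ℂ => derivative p)
    (fun i : Fin n => (X : Polynomial ℂ) ^ (i : ℕ)) with hW
  obtain ⟨kk, hkk⟩ : ∃ kk, W.coeff kk ≠ 0 := by
    by_contra hall
    push_neg at hall
    exact (monomial_wr_ne_zero n) (Polynomial.ext fun kk => by rw [Polynomial.coeff_zero]; exact hall kk)
  rw [h0] at hsum
  have hc := congrArg (fun p : Polynomial (Polynomial ℂ) =>
    (Polynomial.coeff p kk).coeff n) hsum.symm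
  simp only [Polynomial.coeff_zero] at hc
  rw [Polynomial.finset_sum_coeff, Polynomial.finset_sum_coeff] at hc
  have hterm : ∀ s : Finset (Fin n),
      ((Polynomial.C t ^ s.card • ιR (wr (fun p : Polynomial ℂ => derivative p) (q s))).coeff kk)
        = t ^ s.card * Polynomial.C
            ((wr (fun p : Polynomial ℂ => derivative p) (q s)).coeff kk) := by
    intro s
    rw [smul_eq_mul, ← map_pow, Polynomial.coeff_C_mul]
    congr 1
    exact Polynomial.coeff_map _ _
  rw [Finset.sum_congr rfl (fun s _ => congrArg (fun z => z.coeff n) (hterm s))] at hc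
  have hcoeff : ∀ s : Finset (Fin n),
      ((t ^ s.card * Polynomial.C
          ((wr (fun p : Polynomial ℂ => derivative p) (q s)).coeff kk)).coeff n)
        = if n = s.card then (wr (fun p : Polynomial ℂ => derivative p) (q s)).coeff kk
          else 0 := by
    intro s
    rw [ht, mul_comm, Polynomial.coeff_C_mul, Polynomial.coeff_X_pow]
    split_ifs <;> simp
  rw [Finset.sum_congr rfl (fun s _ => hcoeff s)] at hc
  rw [Finset.sum_eq_single Finset.univ
    (fun s _ hs => by
      rw [if_neg]
      intro hcard
      exact hs ((Finset.card_eq_iff_eq_univ s).mp (by rw [← hcard, Fintype.card_fin])))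
    (fun hs => absurd (Finset.mem_univ _) hs)] at hc
  rw [if_pos (by rw [Finset.card_univ, Fintype.card_fin])] at hc
  apply hkk
  rw [← hc]
  congr 1
  rw [hq, hW]
  congr 1
  funext i
  simp [Finset.piecewise]

end Pert



section Assemble

local notation "RR" => Polynomial (Polynomial ℂ)
local notation "KK" => FractionRing (Polynomial (Polynomial ℂ))
local notation "ιK" => algebraMap (Polynomial (Polynomial ℂ)) (FractionRing (Polynomial (Polynomial ℂ)))
local notation "dc" => (fun p : Polynomial ℂ => derivative p)
local notation "dR" => (fun p : Polynomial (Polynomial ℂ) => derivative p)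

lemma isDeriv_fderiv : IsDeriv (fderiv (B := Polynomial ℂ)) :=
  ⟨fderiv_add, fderiv_mul⟩

lemma hcommK : ∀ p : RR, ιK (derivative p) = fderiv (ιK p) :=
  fun p => (fderiv_algebraMap p).symm

theorem main_poly (n m : ℕ) (u : Fin n → Polynomial ℂ) (h' : Fin (m + 1) → Polynomial ℂ) :
    wr dc (fun i : Fin (m + 1) => wr dc (Fin.append u ![h' i]))
      = wr dc u ^ m * wr dc (Fin.append u h') := by
  classical
  set G : Fin n → RR := fun i => ιR (u i) + Polynomial.C Polynomial.X * X ^ (i : ℕ) with hG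
  set H : Fin (m + 1) → RR := fun i => ιR (h' i) with hH
  have hInj : Function.Injective (ιK) := IsFractionRing.injective RR KK
  -- segment nonvanishing over K
  have hsegR : ∀ (j : ℕ) (hj : j ≤ n),
      wr dR (fun i : Fin j => G (Fin.castLE hj i)) ≠ 0 := by
    intro j hj
    exact pert_wr_ne_zero j (fun i => u (Fin.castLE hj i))
  have hseg : ∀ (j : ℕ) (hj : j ≤ n),
      wr fderiv (fun i : Fin j => (fun i => ιK (G i)) (Fin.castLE hj i)) ≠ 0 := by
    intro j hj
    have hmap := wr_map (ιK) dR fderiv hcommK (fun i : Fin j => G (Fin.castLE hj i))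
    intro hzero
    apply hsegR j hj
    apply hInj
    rw [hmap, map_zero]
    exact hzero
  have hkey := key isDeriv_fderiv n (fun i => ιK (G i)) hseg (m + 1) (fun i => ιK (H i))
  -- rewrite in terms of images
  have hone : ∀ x : RR, (fun z : Fin 1 => ιK (((![x] : Fin 1 → RR)) z)) = ![ιK x] := by
    intro x
    funext z
    obtain rfl : z = 0 := Subsingleton.elim z 0
    rfl
  have happ : ∀ (m' : ℕ) (w : Fin m' → RR),
      Fin.append (fun i => ιK (G i)) (fun i => ιK (w i))
        = fun z => ιK (Fin.append G w z) := by
    intro m' w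
    have := comp_append (fun x : RR => ιK x) G w
    funext z
    exact (congrFun this z).symm
  have hinner : ∀ i : Fin (m + 1),
      wr fderiv (Fin.append (fun i => ιK (G i)) ![ιK (H i)])
        = ιK (wr dR (Fin.append G ![H i])) := by
    intro i
    rw [← hone (H i), happ 1 ![H i], ← wr_map (ιK) dR fderiv hcommK]
  have houter : wr fderiv (fun i : Fin (m + 1) =>
        wr fderiv (Fin.append (fun i => ιK (G i)) ![ιK (H i)]))
      = ιK (wr dR (fun i : Fin (m + 1) => wr dR (Fin.append G ![H i]))) := by
    rw [wr_map (ιK) dR fderiv hcommK]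
    congr 1
    funext i
    exact hinner i
  have hfull : wr fderiv (Fin.append (fun i => ιK (G i)) (fun i => ιK (H i)))
      = ιK (wr dR (Fin.append G H)) := by
    rw [happ _ H, ← wr_map (ιK) dR fderiv hcommK]
  have hG0 : wr fderiv (fun i => ιK (G i)) = ιK (wr dR G) :=
    (wr_map (ιK) dR fderiv hcommK G).symm
  rw [houter, hfull, hG0] at hkey
  rw [← map_mul, ← map_pow, ← map_mul] at hkey
  have hkeyR := hInj hkey
  have hW0 : wr dR G ≠ 0 := by
    have h9 := hsegR n le_rfl
    have h10 : (fun i : Fin n => G (Fin.castLE le_rfl i)) = G := by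
      funext i
      congr 1
    rwa [h10] at h9
  have hres : wr dR (fun i : Fin (m + 1) => wr dR (Fin.append G ![H i]))
      = wr dR G ^ m * wr dR (Fin.append G H) := by
    have h2 : wr dR (fun i : Fin (m + 1) => wr dR (Fin.append G ![H i])) * wr dR G
        = (wr dR G ^ m * wr dR (Fin.append G H)) * wr dR G := by
      rw [hkeyR]; ring
    exact mul_right_cancel₀ hW0 h2
  -- specialize t := 0
  set φ : RR →+* Polynomial ℂ := Polynomial.mapRingHom (Polynomial.evalRingHom (0 : ℂ)) with hφ
  have hcommφ : ∀ p : RR, φ (derivative p) = derivative (φ p) := by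
    intro p
    simp [hφ, derivative_map]
  have hφι : ∀ p : Polynomial ℂ, φ (ιR p) = p := by
    intro p
    simp only [hφ, ιR, Polynomial.coe_mapRingHom, Polynomial.map_map]
    rw [show (Polynomial.evalRingHom (0 : ℂ)).comp (Polynomial.C : ℂ →+* Polynomial ℂ)
        = RingHom.id ℂ by
      ext a
      simp]
    exact Polynomial.map_id
  have hφG : ∀ i, φ (G i) = u i := by
    intro i
    simp only [hG, map_add, map_mul, map_pow, hφι]
    simp [hφ]
  have hφH : ∀ i, φ (H i) = h' i := fun i => hφι (h' i)
  have hres2 := congrArg φ hres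
  rw [map_mul, map_pow] at hres2
  rw [wr_map φ dR dc hcommφ, wr_map φ dR dc hcommφ, wr_map φ dR dc hcommφ] at hres2
  have e1 : (fun i : Fin (m + 1) => φ (wr dR (Fin.append G ![H i])))
      = fun i : Fin (m + 1) => wr dc (Fin.append u ![h' i]) := by
    funext i
    rw [wr_map φ dR dc hcommφ]
    congr 1
    funext z
    have hz := congrFun (comp_append φ G ![H i]) z
    show φ (Fin.append G ![H i] z) = Fin.append u ![h' i] z
    rw [show (⇑φ ∘ Fin.append G ![H i]) z = φ (Fin.append G ![H i] z) from rfl] at hz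
    have h1 : ⇑φ ∘ G = u := funext hφG
    have h2 : ⇑φ ∘ (![H i] : Fin 1 → RR) = ![h' i] := by
      funext w
      obtain rfl : w = 0 := Subsingleton.elim w 0
      exact hφH i
    rw [h1, h2] at hz
    rw [hz]
  have e2 : (fun i => φ (G i)) = u := funext hφG
  have e3 : (fun z => φ (Fin.append G H z)) = Fin.append u h' := by
    funext z
    have hz := congrFun (comp_append φ G H) z
    rw [show (⇑φ ∘ Fin.append G H) z = φ (Fin.append G H z) from rfl] at hz
    have h1 : ⇑φ ∘ G = u := funext hφG
    have h2 : ⇑φ ∘ H = h' := funext hφH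
    rw [h1, h2] at hz
    exact hz
  rw [e1, e2, e3] at hres2
  exact hres2

theorem final_statement (k s : ℕ) (hks : k ≤ s) (g : Fin (s + 1) → Polynomial ℂ) :
    Wr (fun i : Fin (k + 1) =>
        Wr (Fin.snoc (fun j : Fin (s - k) => g ⟨j.val, Nat.lt_of_lt_of_le j.isLt (by omega)⟩)
          (g ⟨s - k + i.val, Nat.lt_of_lt_of_le (Nat.add_lt_add_left i.isLt (s - k)) (by omega)⟩)))
      = (Wr (fun j : Fin (s - k) => g ⟨j.val, Nat.lt_of_lt_of_le j.isLt (by omega)⟩)) ^ k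
          * Wr g := by
  classical
  have hnm : (s - k) + (k + 1) = s + 1 := by omega
  set u : Fin (s - k) → Polynomial ℂ := fun j => g ⟨j.val, Nat.lt_of_lt_of_le j.isLt (by omega)⟩ with hu
  set h' : Fin (k + 1) → Polynomial ℂ :=
    fun i => g ⟨s - k + i.val, Nat.lt_of_lt_of_le (Nat.add_lt_add_left i.isLt (s - k)) (by omega)⟩ with hh'
  have hMain := main_poly (s - k) k u h'
  have hWr : ∀ {a : ℕ} (f : Fin a → Polynomial ℂ), Wr f = wr dc f := fun f => rfl
  have hsnoc : ∀ i : Fin (k + 1),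
      Fin.append u ![h' i] = Fin.snoc u (h' i) := by
    intro i
    exact Fin.append_right_eq_snoc u ![h' i]
  have hgfull : wr dc (Fin.append u h') = wr dc g := by
    have hcomp : Fin.append u h' = g ∘ Fin.cast hnm := by
      funext i
      refine Fin.addCases (fun l => ?_) (fun r => ?_) i
      · rw [Fin.append_left]
        show u l = g (Fin.cast hnm (Fin.castAdd (k + 1) l))
        rw [hu]
        congr 1
      · rw [Fin.append_right]
        show h' r = g (Fin.cast hnm (Fin.natAdd (s - k) r))
        rw [hh']
        congr 1
    rw [hcomp, wr_cast]
  rw [hWr, hWr]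
  calc wr dc (fun i : Fin (k + 1) => Wr (Fin.snoc u (h' i)))
      = wr dc (fun i : Fin (k + 1) => wr dc (Fin.append u ![h' i])) := by
        congr 1
        funext i
        rw [hWr, hsnoc i]
    _ = wr dc u ^ k * wr dc (Fin.append u h') := hMain
    _ = wr dc u ^ k * wr dc g := by rw [hgfull]

end Assemble

end WrAux

open WrAux in
/-- Fix `0 ≤ k ≤ s` and polynomials `g₁,…,g_{s+1}`.
For `i = s−k+1,…,s+1` set `V(i) = Wr(g₁,…,g_{s−k}, g_i)`.  Then
`Wr(V(s−k+1),…,V(s+1)) = (Wr(g₁,…,g_{s−k}))^k · Wr(g₁,…,g_{s+1})`.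
(Indices here are 0-based: `g i` for `i : Fin (s+1)` is `g_{i+1}`.) -/
theorem wronskian_identity_general_one (k s : ℕ) (hks : k ≤ s)
    (g : Fin (s + 1) → Polynomial ℂ) :
    Wr (fun i : Fin (k + 1) =>
        Wr (Fin.snoc (fun j : Fin (s - k) => g ⟨j.val, by have := j.isLt; omega⟩)
          (g ⟨s - k + i.val, by have := i.isLt; omega⟩)))
      = (Wr (fun j : Fin (s - k) => g ⟨j.val, by have := j.isLt; omega⟩)) ^ k
          * Wr g := by
  exact final_statement k s hks g
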